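/- The map Φ⁻¹(x,y,z) = (m(x,y), m(y,z), m(z,x)) with m the midpoint map of the solvable symmetric surface is a bijection of M³ = (ℝ²)³ onto itself. -/
import Mathlib


noncomputable def midM (x y : ℝ × ℝ) : ℝ × ℝ :=
  ((x.1 + y.1) / 2, (x.2 + y.2) / (2 * Real.cosh (2 * (x.1 - y.1))))

noncomputable def PhiInv (p : (ℝ × ℝ) × (ℝ × ℝ) × (ℝ × ℝ)) :
    (ℝ × ℝ) × (ℝ × ℝ) × (ℝ × ℝ) :=
  (midM p.1 p.2.1, midM p.2.1 p.2.2, midM p.2.2 p.1)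

noncomputable def PhiG (p : (ℝ × ℝ) × (ℝ × ℝ) × (ℝ × ℝ)) :
    (ℝ × ℝ) × (ℝ × ℝ) × (ℝ × ℝ) :=
  ((p.1.1 - p.2.1.1 + p.2.2.1,
      (2 * Real.cosh (2 * (2 * (p.2.2.1 - p.2.1.1))) * p.1.2
        - 2 * Real.cosh (2 * (2 * (p.1.1 - p.2.2.1))) * p.2.1.2
        + 2 * Real.cosh (2 * (2 * (p.2.1.1 - p.1.1))) * p.2.2.2) / 2),
   (p.1.1 + p.2.1.1 - p.2.2.1,
      (2 * Real.cosh (2 * (2 * (p.2.2.1 - p.2.1.1))) * p.1.2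
        + 2 * Real.cosh (2 * (2 * (p.1.1 - p.2.2.1))) * p.2.1.2
        - 2 * Real.cosh (2 * (2 * (p.2.1.1 - p.1.1))) * p.2.2.2) / 2),
   (-p.1.1 + p.2.1.1 + p.2.2.1,
      (-(2 * Real.cosh (2 * (2 * (p.2.2.1 - p.2.1.1))) * p.1.2)
        + 2 * Real.cosh (2 * (2 * (p.1.1 - p.2.2.1))) * p.2.1.2
        + 2 * Real.cosh (2 * (2 * (p.2.1.1 - p.1.1))) * p.2.2.2) / 2))

theorem PhiInv_bijective : Function.Bijective PhiInv := by
  have hcosh : ∀ t : ℝ, 2 * Real.cosh t ≠ 0 := fun t => ne_of_gt (by positivity)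
  apply Function.bijective_iff_has_inverse.2
  refine ⟨PhiG, ?_, ?_⟩
  · rintro ⟨⟨x1, x2⟩, ⟨y1, y2⟩, ⟨z1, z2⟩⟩
    simp only [PhiInv, PhiG, midM]
    have e1 : 2 * (2 * ((z1 + x1) / 2 - (y1 + z1) / 2)) = 2 * (x1 - y1) := by ring
    have e2 : 2 * (2 * ((x1 + y1) / 2 - (z1 + x1) / 2)) = 2 * (y1 - z1) := by ring
    have e3 : 2 * (2 * ((y1 + z1) / 2 - (x1 + y1) / 2)) = 2 * (z1 - x1) := by ring
    simp only [e1, e2, e3]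
    have K1 : 2 * Real.cosh (2 * (x1 - y1)) * ((x2 + y2) / (2 * Real.cosh (2 * (x1 - y1))))
        = x2 + y2 := by rw [mul_comm]; exact div_mul_cancel₀ _ (hcosh _)
    have K2 : 2 * Real.cosh (2 * (y1 - z1)) * ((y2 + z2) / (2 * Real.cosh (2 * (y1 - z1))))
        = y2 + z2 := by rw [mul_comm]; exact div_mul_cancel₀ _ (hcosh _)
    have K3 : 2 * Real.cosh (2 * (z1 - x1)) * ((z2 + x2) / (2 * Real.cosh (2 * (z1 - x1))))
        = z2 + x2 := by rw [mul_comm]; exact div_mul_cancel₀ _ (hcosh _)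
    simp only [K1, K2, K3]
    refine Prod.ext ?_ (Prod.ext ?_ ?_) <;> refine Prod.ext ?_ ?_ <;> simp <;> ring
  · rintro ⟨⟨a1, a2⟩, ⟨b1, b2⟩, ⟨c1, c2⟩⟩
    simp only [PhiInv, PhiG, midM]
    have e1 : 2 * (a1 - b1 + c1 - (a1 + b1 - c1)) = 2 * (2 * (c1 - b1)) := by ring
    have e2 : 2 * (a1 + b1 - c1 - (-a1 + b1 + c1)) = 2 * (2 * (a1 - c1)) := by ring
    have e3 : 2 * (-a1 + b1 + c1 - (a1 - b1 + c1)) = 2 * (2 * (b1 - a1)) := by ring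
    simp only [e1, e2, e3]
    refine Prod.ext ?_ (Prod.ext ?_ ?_) <;> refine Prod.ext ?_ ?_ <;> simp <;>
      first
        | ring1
        | (rw [div_eq_iff (hcosh _)]; ring1)
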